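/- Suppose w_1, …, w_n are vertices such that for each 1 ≤ i ≤ n−1 there are disjoint sets X_i, Y_{i+1} of size 2k forming a complete bipartite graph in blue between blocks B(w_i) and B(w_{i+1}) of a coloured graph Γ, where all B(w_i) are pairwise disjoint blue cliques. Then Γ contains a blue copy of P_{2kn}^k, and in particular a blue copy of P_n^k. -/

import Mathlib

/-- The `k`-th power of a graph. -/
def powGraph {V : Type*} (G : SimpleGraph V) (k : ℕ) : SimpleGraph V where
  Adj u v := u ≠ v ∧ ∃ w : G.Walk u v, w.length ≤ k
  symm := by
    constructor
    rintro u v ⟨h, w, hw⟩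
    exact ⟨h.symm, w.reverse, by simpa using hw⟩
  loopless := by constructor; rintro u ⟨h, -⟩; exact h rfl

lemma pathWalk_bound {m : ℕ} {a b : Fin m} (w : (SimpleGraph.pathGraph m).Walk a b) :
    b.val ≤ a.val + w.length ∧ a.val ≤ b.val + w.length := by
  induction w with
  | nil => simp
  | @cons u v w h p ih =>
    rw [SimpleGraph.pathGraph_adj] at h
    simp only [SimpleGraph.Walk.length_cons]
    omega

lemma pathWalk_exists {m : ℕ} : ∀ (d : ℕ) (a b : Fin m), b.val = a.val + d →
    ∃ w : (SimpleGraph.pathGraph m).Walk a b, w.length = d := by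
  intro d
  induction d with
  | zero =>
    intro a b h
    obtain rfl : a = b := Fin.ext (by omega)
    exact ⟨.nil, rfl⟩
  | succ d ih =>
    intro a b h
    have hb := b.isLt
    have hlt : a.val + 1 < m := by omega
    have hadj : (SimpleGraph.pathGraph m).Adj a ⟨a.val + 1, hlt⟩ :=
      (SimpleGraph.pathGraph_adj).mpr (Or.inl rfl)
    obtain ⟨w, hw⟩ := ih ⟨a.val + 1, hlt⟩ b (by simp; omega)
    exact ⟨.cons hadj w, by simp [hw]⟩

lemma powPath_adj {m k : ℕ} {a b : Fin m} :
    (powGraph (SimpleGraph.pathGraph m) k).Adj a b ↔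
      a ≠ b ∧ b.val ≤ a.val + k ∧ a.val ≤ b.val + k := by
  constructor
  · rintro ⟨hne, w, hw⟩
    have := pathWalk_bound w
    exact ⟨hne, by omega, by omega⟩
  · rintro ⟨hne, h1, h2⟩
    refine ⟨hne, ?_⟩
    rcases le_total a.val b.val with h | h
    · obtain ⟨w, hw⟩ := pathWalk_exists (b.val - a.val) a b (by omega)
      exact ⟨w, by omega⟩
    · obtain ⟨w, hw⟩ := pathWalk_exists (a.val - b.val) b a (by omega)
      exact ⟨w.reverse, by rw [SimpleGraph.Walk.length_reverse, hw]; omega⟩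

lemma finsetEnum {V : Type*} {k : ℕ} (s : Finset V) (hc : s.card = k) :
    ∃ f : Fin k → V, Function.Injective f ∧ ∀ j, f j ∈ s := by
  refine ⟨fun j => (s.equivFin.symm (Fin.cast hc.symm j) : V), fun j1 j2 h => ?_,
    fun j => (s.equivFin.symm _).2⟩
  have h1 := s.equivFin.symm.injective (Subtype.coe_injective h)
  exact Fin.cast_injective hc.symm h1

/-- Pairwise disjoint blue cliques `B(w_1), …, B(w_n)` joined by blue
complete bipartite graphs `K_{2k,2k}` (with sides `X_i ⊆ B(w_i)`, `Y_{i+1} ⊆ B(w_{i+1})`)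
yield a blue copy of `P_{2kn}^k`, and in particular a blue copy of `P_n^k`. -/
theorem stmt5 {V : Type*} (Γ Blue : SimpleGraph V) (hB : Blue ≤ Γ)
    (n k : ℕ) (hn : 2 ≤ n) (hk : 1 ≤ k)
    (B : Fin n → Finset V)
    (hdisj : ∀ i j, i ≠ j → Disjoint (B i) (B j))
    (hclique : ∀ i, ∀ u ∈ B i, ∀ v ∈ B i, u ≠ v → Blue.Adj u v)
    (X Y : Fin n → Finset V)
    (hXY : ∀ (i : ℕ) (h : i + 1 < n),
      X ⟨i, by omega⟩ ⊆ B ⟨i, by omega⟩ ∧ Y ⟨i + 1, h⟩ ⊆ B ⟨i + 1, h⟩ ∧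
      Disjoint (X ⟨i, by omega⟩) (Y ⟨i + 1, h⟩) ∧
      (X ⟨i, by omega⟩).card = 2 * k ∧ (Y ⟨i + 1, h⟩).card = 2 * k ∧
      ∀ u ∈ X ⟨i, by omega⟩, ∀ v ∈ Y ⟨i + 1, h⟩, Blue.Adj u v) :
    (∃ f : powGraph (SimpleGraph.pathGraph (2 * k * n)) k →g Blue,
        Function.Injective f) ∧
    (∃ f : powGraph (SimpleGraph.pathGraph n) k →g Blue, Function.Injective f) := by
  classical
  have key : ∀ i : Fin n, ∃ A C : Finset V,
      A ⊆ B i ∧ C ⊆ B i ∧ Disjoint A C ∧ A.card = k ∧ C.card = k ∧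
      (0 < i.val → A ⊆ Y i) ∧ (i.val + 1 < n → C ⊆ X i) := by
    intro i
    by_cases hi : i.val + 1 < n
    · have hX := hXY i.val hi
      simp only [Fin.eta] at hX
      obtain ⟨hXB, -, -, hXcard, -, -⟩ := hX
      obtain ⟨C, hCX, hCcard⟩ := Finset.exists_subset_card_eq (show k ≤ (X i).card by omega)
      by_cases hi0 : 0 < i.val
      · have h2 : (i.val - 1) + 1 < n := by omega
        have hY := hXY (i.val - 1) h2
        have hieq : (⟨i.val - 1 + 1, h2⟩ : Fin n) = i := Fin.ext (by simp; omega)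
        rw [hieq] at hY
        obtain ⟨-, hYB, -, -, hYcard, -⟩ := hY
        obtain ⟨A, hA, hAcard⟩ := Finset.exists_subset_card_eq
          (show k ≤ ((Y i) \ C).card by have := Finset.le_card_sdiff C (Y i); omega)
        refine ⟨A, C, fun x hx => hYB (Finset.sdiff_subset (hA hx)),
          fun x hx => hXB (hCX hx),
          Finset.disjoint_left.mpr fun x hx => (Finset.mem_sdiff.mp (hA hx)).2,
          hAcard, hCcard,
          fun _ => fun x hx => (Finset.mem_sdiff.mp (hA hx)).1,
          fun _ => hCX⟩
      · obtain ⟨A, hA, hAcard⟩ := Finset.exists_subset_card_eq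
          (show k ≤ ((X i) \ C).card by have := Finset.le_card_sdiff C (X i); omega)
        refine ⟨A, C, fun x hx => hXB (Finset.sdiff_subset (hA hx)),
          fun x hx => hXB (hCX hx),
          Finset.disjoint_left.mpr fun x hx => (Finset.mem_sdiff.mp (hA hx)).2,
          hAcard, hCcard,
          fun h0 => absurd h0 hi0,
          fun _ => hCX⟩
    · have hi' := i.isLt
      have h2 : (n - 2) + 1 < n := by omega
      have hieq : (⟨n - 2 + 1, h2⟩ : Fin n) = i := Fin.ext (by simp; omega)
      have hY := hXY (n - 2) h2
      rw [hieq] at hY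
      obtain ⟨-, hYB, -, -, hYcard, -⟩ := hY
      obtain ⟨A, hAY, hAcard⟩ := Finset.exists_subset_card_eq
        (show k ≤ (Y i).card by omega)
      obtain ⟨C, hC, hCcard⟩ := Finset.exists_subset_card_eq
        (show k ≤ ((Y i) \ A).card by have := Finset.le_card_sdiff A (Y i); omega)
      refine ⟨A, C, fun x hx => hYB (hAY hx),
        fun x hx => hYB (Finset.sdiff_subset (hC hx)),
        Finset.disjoint_right.mpr fun x hx => (Finset.mem_sdiff.mp (hC hx)).2,
        hAcard, hCcard, fun _ => hAY, fun hlt => absurd hlt hi⟩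
  choose A C hAB hCB hACdisj hAcard hCcard hAY hCX using key
  choose fA hfAinj hfA using fun i => finsetEnum (A i) (hAcard i)
  choose fC hfCinj hfC using fun i => finsetEnum (C i) (hCcard i)
  let g : (i : Fin n) → Fin (2 * k) → V := fun i j =>
    if h : (j : ℕ) < k then fA i ⟨j, h⟩
    else fC i ⟨(j : ℕ) - k, by have := j.isLt; omega⟩
  have g_memA : ∀ i (j : Fin (2 * k)), (j : ℕ) < k → g i j ∈ A i := by
    intro i j h
    simp only [g, dif_pos h]
    exact hfA i _
  have g_memC : ∀ i (j : Fin (2 * k)), k ≤ (j : ℕ) → g i j ∈ C i := by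
    intro i j h
    simp only [g, dif_neg (not_lt.mpr h)]
    exact hfC i _
  have g_mem : ∀ i (j : Fin (2 * k)), g i j ∈ B i := by
    intro i j
    rcases lt_or_ge (j : ℕ) k with h | h
    · exact hAB i (g_memA i j h)
    · exact hCB i (g_memC i j h)
  have g_inj : ∀ i, Function.Injective (g i) := by
    intro i j1 j2 he
    rcases lt_or_ge (j1 : ℕ) k with h1 | h1 <;> rcases lt_or_ge (j2 : ℕ) k with h2 | h2
    · simp only [g, dif_pos h1, dif_pos h2] at he
      have := congrArg Fin.val (hfAinj i he)
      exact Fin.ext (by simpa using this)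
    · exact absurd (g_memA i j1 h1) (Finset.disjoint_right.mp (hACdisj i)
        (he ▸ g_memC i j2 h2))
    · exact absurd (g_memA i j2 h2) (Finset.disjoint_right.mp (hACdisj i)
        (he.symm ▸ g_memC i j1 h1))
    · simp only [g, dif_neg (not_lt.mpr h1), dif_neg (not_lt.mpr h2)] at he
      have := congrArg Fin.val (hfCinj i he)
      simp only at this
      exact Fin.ext (by omega)
  have hq0 : 0 < 2 * k := by omega
  have hdivlt : ∀ j : Fin (2 * k * n), (j : ℕ) / (2 * k) < n := by
    intro j
    rw [Nat.div_lt_iff_lt_mul hq0]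
    calc (j : ℕ) < 2 * k * n := j.isLt
    _ = n * (2 * k) := by ring
  let bl : Fin (2 * k * n) → Fin n := fun j => ⟨(j : ℕ) / (2 * k), hdivlt j⟩
  let F : Fin (2 * k * n) → V := fun j => g (bl j) ⟨(j : ℕ) % (2 * k), Nat.mod_lt _ hq0⟩
  have F_memB : ∀ j, F j ∈ B (bl j) := fun j => g_mem _ _
  have F_inj : Function.Injective F := by
    intro a b he
    by_cases hbe : bl a = bl b
    · simp only [F] at he
      rw [hbe] at he
      have := g_inj (bl b) he
      have hmod : (a : ℕ) % (2 * k) = (b : ℕ) % (2 * k) := by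
        simpa using congrArg Fin.val this
      have hdiv : (a : ℕ) / (2 * k) = (b : ℕ) / (2 * k) := by
        simpa [bl] using congrArg Fin.val hbe
      have : (a : ℕ) = (b : ℕ) := by
        rw [← Nat.div_add_mod (a : ℕ) (2 * k), ← Nat.div_add_mod (b : ℕ) (2 * k),
          hdiv, hmod]
      exact Fin.ext this
    · exact absurd (F_memB a) (Finset.disjoint_right.mp (hdisj _ _ hbe)
        (he ▸ F_memB b))
  have main : ∀ a b : Fin (2 * k * n), (a : ℕ) < (b : ℕ) → (b : ℕ) ≤ (a : ℕ) + k →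
      Blue.Adj (F a) (F b) := by
    intro a b hab hbk
    have ha := Nat.div_add_mod (a : ℕ) (2 * k)
    have hb := Nat.div_add_mod (b : ℕ) (2 * k)
    have hra : (a : ℕ) % (2 * k) < 2 * k := Nat.mod_lt _ hq0
    have hrb : (b : ℕ) % (2 * k) < 2 * k := Nat.mod_lt _ hq0
    have hdle : (a : ℕ) / (2 * k) ≤ (b : ℕ) / (2 * k) :=
      Nat.div_le_div_right (le_of_lt hab)
    have hdlt : (b : ℕ) / (2 * k) < (a : ℕ) / (2 * k) + 2 := by
      rw [Nat.div_lt_iff_lt_mul hq0]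
      nlinarith [ha, hra, hbk, hk]
    rcases Nat.lt_or_ge ((b : ℕ) / (2 * k)) ((a : ℕ) / (2 * k) + 1) with hc | hc
    · have hbeq : bl a = bl b :=
        Fin.ext (show (a : ℕ) / (2 * k) = (b : ℕ) / (2 * k) by omega)
      have hne : F a ≠ F b := fun he => absurd (F_inj he)
        (Fin.ne_of_val_ne (by omega))
      exact hclique (bl a) (F a) (F_memB a) (F b) (hbeq ▸ F_memB b) hne
    · have hdb : (b : ℕ) / (2 * k) = (a : ℕ) / (2 * k) + 1 := by omega
      have hb' : 2 * k * ((a : ℕ) / (2 * k)) + 2 * k + (b : ℕ) % (2 * k) = (b : ℕ) := by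
        rw [hdb, Nat.mul_add, Nat.mul_one] at hb
        exact hb
      have hrage : k ≤ (a : ℕ) % (2 * k) := by omega
      have hrblt : (b : ℕ) % (2 * k) < k := by omega
      have hlt' : (bl a : ℕ) + 1 < n := by
        show (a : ℕ) / (2 * k) + 1 < n
        rw [← hdb]
        exact hdivlt b
      have hain : F a ∈ X (bl a) := hCX (bl a) hlt' (g_memC _ _ hrage)
      have hbin : F b ∈ Y (bl b) := by
        refine hAY (bl b) ?_ (g_memA _ _ hrblt)
        show 0 < (b : ℕ) / (2 * k)
        rw [hdb]
        exact Nat.succ_pos _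
      have hfb : bl b = ⟨(bl a : ℕ) + 1, hlt'⟩ :=
        Fin.ext (show (b : ℕ) / (2 * k) = (a : ℕ) / (2 * k) + 1 by omega)
      exact (hXY (bl a : ℕ) hlt').2.2.2.2.2 (F a) hain (F b) (hfb ▸ hbin)
  have Fmap : ∀ ⦃a b⦄, (powGraph (SimpleGraph.pathGraph (2 * k * n)) k).Adj a b →
      Blue.Adj (F a) (F b) := by
    intro a b h
    rw [powPath_adj] at h
    obtain ⟨hne, h1, h2⟩ := h
    rcases lt_trichotomy (a : ℕ) (b : ℕ) with h | h | h
    · exact main a b h (by omega)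
    · exact absurd (Fin.ext h) hne
    · exact (main b a h (by omega)).symm
  have hn2 : n ≤ 2 * k * n := Nat.le_mul_of_pos_left n (by omega)
  let E : Fin n → Fin (2 * k * n) := fun i => ⟨(i : ℕ), by have := i.isLt; omega⟩
  have Emap : ∀ ⦃a b : Fin n⦄, (powGraph (SimpleGraph.pathGraph n) k).Adj a b →
      (powGraph (SimpleGraph.pathGraph (2 * k * n)) k).Adj (E a) (E b) := by
    intro a b h
    rw [powPath_adj] at h ⊢
    refine ⟨fun hc => h.1 (Fin.ext ?_), h.2.1, h.2.2⟩
    simpa [E] using congrArg Fin.val hc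
  refine ⟨⟨⟨F, fun {a b} h => Fmap h⟩, F_inj⟩,
    ⟨⟨fun i => F (E i), fun {a b} h => Fmap (Emap h)⟩, ?_⟩⟩
  intro x y hxy
  have hzz : F (E x) = F (E y) := hxy
  have := congrArg Fin.val (F_inj hzz)
  exact Fin.ext (by simpa [E] using this)
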